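/- Let γ be either a cycle in the hexagonal lattice ℍ or a doubly-infinite self-avoiding path in ℍ, and let σ be a configuration assigning the same spin value to all vertices of γ. Then in any legal flip sequence of the majority dynamics starting from σ, no vertex of γ is ever flipped; in particular every configuration in the sequence assigns that common value to all vertices of γ. -/

import Mathlib

open MeasureTheory ENNReal

/-- Sites of the hexagonal (honeycomb) lattice ℍ, coordinatized by ℤ × ℤ. -/
abbrev Site : Type := ℤ × ℤ

/-- A spin configuration: `true` stands for spin +1, `false` for spin −1. -/
abbrev Config : Type := Site → Bool

/-- The three neighbors of a site: `(i,j)` is adjacent to `(i−1,j)`, `(i+1,j)`, and to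
`(i,j+1)` if `i+j` is even, to `(i,j−1)` if `i+j` is odd. -/
def nbrs (x : Site) : List Site :=
  [(x.1 - 1, x.2), (x.1 + 1, x.2),
   if Even (x.1 + x.2) then (x.1, x.2 + 1) else (x.1, x.2 - 1)]

/-- Adjacency in the hexagonal lattice. -/
def Adj (x y : Site) : Prop := y ∈ nbrs x

instance : DecidableRel Adj := fun x y => by unfold Adj; infer_instance

/-- Flipping the spin at site `x` is legal for the zero-temperature majority dynamics:
`σ x` disagrees with at least two of the three spins of the neighbors of `x`. -/
def LegalMaj (σ : Config) (x : Site) : Prop :=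
  2 ≤ (nbrs x).countP (fun y => σ y != σ x)

/-- The configuration obtained from `σ` by flipping the spin at `x`. -/
def flipAt (σ : Config) (x : Site) : Config := Function.update σ x (!(σ x))

/-- `η 0, η 1, …` is a legal flip sequence of the majority dynamics, of length `m ∈ ℕ∞`
(`m = ⊤` for an infinite sequence): each configuration is obtained from the previous one by
flipping the spin at a single site where the flip is legal. -/
def IsLegalFlipSeqMaj (η : ℕ → Config) (m : ℕ∞) : Prop :=
  ∀ n : ℕ, (n : ℕ∞) + 1 ≤ m → ∃ x, LegalMaj (η n) x ∧ η (n + 1) = flipAt (η n) x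

/-- `S` is the vertex set of a cycle in ℍ: the range of an injective cyclic sequence of
`n ≥ 3` sites with consecutive sites adjacent. -/
def IsCycleSet (S : Set Site) : Prop :=
  ∃ n : ℕ, 3 ≤ n ∧ ∃ c : ZMod n → Site,
    Function.Injective c ∧ (∀ i, Adj (c i) (c (i + 1))) ∧ S = Set.range c

/-- `S` is the vertex set of a doubly-infinite self-avoiding path in ℍ. -/
def IsBiInfinitePathSet (S : Set Site) : Prop :=
  ∃ p : ℤ → Site, Function.Injective p ∧ (∀ k, Adj (p k) (p (k + 1))) ∧ S = Set.range p

/-- Adjacency in the hexagonal lattice is symmetric. -/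
lemma adj_symm {x y : Site} (h : Adj x y) : Adj y x := by
  obtain ⟨i, j⟩ := x; obtain ⟨a, b⟩ := y
  unfold Adj nbrs at *
  simp only [List.mem_cons, List.mem_singleton] at *
  by_cases h1 : Even (i + j) <;> by_cases h2 : Even (a + b) <;>
    have h1' := h1 <;> have h2' := h2 <;>
    simp only [Int.even_iff, Int.not_even_iff] at h1' h2' <;>
    simp [h1, h2, Prod.ext_iff] at h ⊢ <;> omega

/-- If a site has two distinct neighbors agreeing with it, flipping it is not legal. -/
lemma not_legal_of_two_nbrs (σ : Config) (v a b : Site) (ha : a ∈ nbrs v)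
    (hb : b ∈ nbrs v) (hab : a ≠ b) (hva : σ a = σ v) (hvb : σ b = σ v) :
    ¬ LegalMaj σ v := by
  unfold LegalMaj nbrs at *
  by_cases hv : Even (v.1 + v.2) <;>
    simp only [hv, ite_true, ite_false, List.mem_cons, List.not_mem_nil, or_false,
      List.mem_singleton] at * <;>
  rcases ha with ha | ha | ha <;> rcases hb with hb | hb | hb <;>
    subst ha <;> subst hb <;>
    first
      | exact absurd rfl hab
      | (simp only [List.countP_cons, List.countP_nil, hva, hvb, bne_self_eq_false,
          cond_false, cond_true] <;> split_ifs <;> simp_all)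

/-- Every vertex of a cycle or bi-infinite path has two distinct neighbors in the set. -/
lemma two_nbrs_in_S (S : Set Site) (hS : IsCycleSet S ∨ IsBiInfinitePathSet S)
    (v : Site) (hv : v ∈ S) :
    ∃ a b : Site, a ∈ S ∧ b ∈ S ∧ a ∈ nbrs v ∧ b ∈ nbrs v ∧ a ≠ b := by
  rcases hS with ⟨n, hn3, c, hinj, hadj, rfl⟩ | ⟨p, hinj, hadj, rfl⟩
  · obtain ⟨i, rfl⟩ := hv
    refine ⟨c (i + 1), c (i - 1), ⟨_, rfl⟩, ⟨_, rfl⟩, hadj i, ?_, ?_⟩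
    · have := adj_symm (hadj (i - 1))
      simpa [Adj] using this
    · intro h
      have h2 : i + 1 = i - 1 := hinj h
      have h3 : (2 : ZMod n) = 0 := by
        have := sub_eq_zero.mpr h2
        rw [show i + 1 - (i - 1) = 2 by ring] at this
        exact this
      haveI : NeZero n := ⟨by omega⟩
      have h4 : (n : ℕ) ∣ 2 := by
        have : ((2 : ℕ) : ZMod n) = 0 := by exact_mod_cast h3
        exact (ZMod.natCast_eq_zero_iff 2 n).mp this
      have := Nat.le_of_dvd (by norm_num) h4
      omega
  · obtain ⟨k, rfl⟩ := hv
    refine ⟨p (k + 1), p (k - 1), ⟨_, rfl⟩, ⟨_, rfl⟩, hadj k, ?_, ?_⟩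
    · have := adj_symm (hadj (k - 1))
      simpa [Adj] using this
    · intro h
      have := hinj h
      omega

/-- if γ is a cycle of ℍ or a doubly-infinite self-avoiding path in ℍ and the
initial configuration gives all its vertices the common spin value `s`, then along any legal
flip sequence of the majority dynamics no vertex of γ is ever flipped: every configuration in
the sequence assigns the value `s` to all vertices of γ. -/
theorem stmt7 (S : Set Site) (hS : IsCycleSet S ∨ IsBiInfinitePathSet S)
    (s : Bool) (σ : Config) (hσ : ∀ v ∈ S, σ v = s)
    (η : ℕ → Config) (m : ℕ∞) (h0 : η 0 = σ) (hseq : IsLegalFlipSeqMaj η m) :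
    ∀ n : ℕ, (n : ℕ∞) ≤ m → ∀ v ∈ S, η n v = s := by
  intro n
  induction n with
  | zero => intro _ v hv; rw [h0]; exact hσ v hv
  | succ n ih =>
    intro hn v hv
    have hm : (n : ℕ∞) + 1 ≤ m := by
      have : ((n + 1 : ℕ) : ℕ∞) = (n : ℕ∞) + 1 := by push_cast; rfl
      rwa [this] at hn
    have hn' : (n : ℕ∞) ≤ m := le_trans le_self_add hm
    obtain ⟨x, hleg, hflip⟩ := hseq n hm
    by_cases hx : x ∈ S
    · exfalso
      obtain ⟨a, b, haS, hbS, han, hbn, hab⟩ := two_nbrs_in_S S hS x hx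
      exact not_legal_of_two_nbrs (η n) x a b han hbn hab
        (by rw [ih hn' a haS, ih hn' x hx]) (by rw [ih hn' b hbS, ih hn' x hx]) hleg
    · rw [hflip]
      unfold flipAt
      rw [Function.update_of_ne (by rintro rfl; exact hx hv)]
      exact ih hn' v hv
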